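/- Let β ≥ β_j > 0 and consider D̂ = [[ĉ, f̂],[0, ĉ⁻¹]] (the Frobenius-optimal scaling, with parameters determined by L and β_j = (det LᵀL)^{1/4}) and D̃ = [[c̃, f̃],[0, c̃⁻¹]] (the equal-row-norm scaling for target norm β). Then D̂ D̃⁻¹ = [[β/β_j, ±√(β⁴−β_j⁴)/(β β_j)],[0, β_j/β]] and its squared spectral norm equals ‖D̂ D̃⁻¹‖₂² = (β² + √(β⁴ − β_j⁴)) / β_j². -/

import Mathlib

set_option maxHeartbeats 1000000


open Matrix

noncomputable def enorm2 {m : ℕ} (v : Fin m → ℝ) : ℝ := Real.sqrt (∑ i, v i ^ 2)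

noncomputable def frob {m n : ℕ} (A : Matrix (Fin m) (Fin n) ℝ) : ℝ :=
  Real.sqrt (∑ i, ∑ j, A i j ^ 2)

noncomputable def specNorm {m n : ℕ} (A : Matrix (Fin m) (Fin n) ℝ) : ℝ :=
  ‖(Matrix.toEuclideanLin A).toContinuousLinearMap‖

noncomputable def sigmaMax (B : Matrix (Fin 2) (Fin 2) ℝ) : ℝ :=
  Real.sqrt (max ((Matrix.isHermitian_conjTranspose_mul_self B).eigenvalues 0)
                 ((Matrix.isHermitian_conjTranspose_mul_self B).eigenvalues 1))

noncomputable def sigmaMin (B : Matrix (Fin 2) (Fin 2) ℝ) : ℝ :=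
  Real.sqrt (min ((Matrix.isHermitian_conjTranspose_mul_self B).eigenvalues 0)
                 ((Matrix.isHermitian_conjTranspose_mul_self B).eigenvalues 1))

lemma specNorm_sq_fin_two (B : Matrix (Fin 2) (Fin 2) ℝ) (μ : ℝ)
    (hp : B 0 0 ^ 2 + B 1 0 ^ 2 ≤ μ)
    (hr : B 0 1 ^ 2 + B 1 1 ^ 2 ≤ μ)
    (hdet : (μ - (B 0 0 ^ 2 + B 1 0 ^ 2)) * (μ - (B 0 1 ^ 2 + B 1 1 ^ 2))
        = (B 0 0 * B 0 1 + B 1 0 * B 1 1) ^ 2) :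
    specNorm B ^ 2 = μ := by
  set p : ℝ := B 0 0 ^ 2 + B 1 0 ^ 2 with hpdef
  set r : ℝ := B 0 1 ^ 2 + B 1 1 ^ 2 with hrdef
  set q : ℝ := B 0 0 * B 0 1 + B 1 0 * B 1 1 with hqdef
  have hμ : 0 ≤ μ := le_trans (by positivity) hp
  set T := (Matrix.toEuclideanLin B).toContinuousLinearMap with hT
  have happ : ∀ (x : EuclideanSpace ℝ (Fin 2)) (i : Fin 2),
      T x i = B i 0 * x 0 + B i 1 * x 1 := by
    intro x i
    show (B *ᵥ _) i = _
    simp [Matrix.mulVec, dotProduct, Fin.sum_univ_two]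
  have hnorm : ∀ y : EuclideanSpace ℝ (Fin 2), ‖y‖ ^ 2 = y 0 ^ 2 + y 1 ^ 2 := by
    intro y
    rw [EuclideanSpace.norm_eq, Real.sq_sqrt (by positivity)]
    simp [Fin.sum_univ_two, sq_abs]
  have hTnorm : ∀ x : EuclideanSpace ℝ (Fin 2),
      ‖T x‖ ^ 2 = (B 0 0 * x 0 + B 0 1 * x 1) ^ 2 + (B 1 0 * x 0 + B 1 1 * x 1) ^ 2 := by
    intro x; rw [hnorm (T x), happ x 0, happ x 1]
  -- the quadratic form bound
  have hs : Real.sqrt (μ - p) ^ 2 = μ - p := Real.sq_sqrt (by linarith)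
  have ht : Real.sqrt (μ - r) ^ 2 = μ - r := Real.sq_sqrt (by linarith)
  set s := Real.sqrt (μ - p)
  set t := Real.sqrt (μ - r)
  have habs : s * t = |q| := by
    rw [← Real.sqrt_mul (by linarith) (μ - r), hdet, Real.sqrt_sq_eq_abs]
  have hq1 : q ≤ s * t := habs ▸ le_abs_self q
  have hq2 : -q ≤ s * t := habs ▸ neg_le_abs q
  have key : ∀ x : EuclideanSpace ℝ (Fin 2), ‖T x‖ ≤ Real.sqrt μ * ‖x‖ := by
    intro x
    have hb : ‖T x‖ ^ 2 ≤ μ * ‖x‖ ^ 2 := by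
      rw [hTnorm x, hnorm x]
      rcases le_total 0 (x 0 * x 1) with hx | hx
      · nlinarith [sq_nonneg (s * x 0 - t * x 1), mul_nonneg (by linarith : (0:ℝ) ≤ s * t - q) hx,
          sq_nonneg (x 0), sq_nonneg (x 1)]
      · nlinarith [sq_nonneg (s * x 0 + t * x 1),
          mul_nonneg (by linarith : (0:ℝ) ≤ s * t + q) (by linarith : (0:ℝ) ≤ -(x 0 * x 1)),
          sq_nonneg (x 0), sq_nonneg (x 1)]
    calc ‖T x‖ = Real.sqrt (‖T x‖ ^ 2) := (Real.sqrt_sq (norm_nonneg _)).symm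
      _ ≤ Real.sqrt (μ * ‖x‖ ^ 2) := Real.sqrt_le_sqrt hb
      _ = Real.sqrt μ * ‖x‖ := by
          rw [Real.sqrt_mul hμ, Real.sqrt_sq (norm_nonneg _)]
  -- an (almost) eigenvector
  obtain ⟨v, hv0, hveq⟩ : ∃ v : EuclideanSpace ℝ (Fin 2),
      0 < ‖v‖ ∧ ‖T v‖ ^ 2 = μ * ‖v‖ ^ 2 := by
    by_cases hq : q = 0
    · have h0 : (μ - p) * (μ - r) = 0 := by rw [hdet, hq]; ring
      rcases mul_eq_zero.mp h0 with h | h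
      · refine ⟨(WithLp.equiv 2 (Fin 2 → ℝ)).symm ![1, 0], ?_, ?_⟩
        · have : ‖(WithLp.equiv 2 (Fin 2 → ℝ)).symm ![1, 0]‖ ^ 2 = 1 := by
            rw [hnorm]; norm_num
          nlinarith [norm_nonneg ((WithLp.equiv 2 (Fin 2 → ℝ)).symm ![1, 0])]
        · rw [hTnorm, hnorm]
          show (B 0 0 * 1 + B 0 1 * 0) ^ 2 + (B 1 0 * 1 + B 1 1 * 0) ^ 2
            = μ * ((1:ℝ) ^ 2 + 0 ^ 2)
          have : μ = p := by linarith
          rw [this, hpdef]; ring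
      · refine ⟨(WithLp.equiv 2 (Fin 2 → ℝ)).symm ![0, 1], ?_, ?_⟩
        · have : ‖(WithLp.equiv 2 (Fin 2 → ℝ)).symm ![0, 1]‖ ^ 2 = 1 := by
            rw [hnorm]; norm_num
          nlinarith [norm_nonneg ((WithLp.equiv 2 (Fin 2 → ℝ)).symm ![0, 1])]
        · rw [hTnorm, hnorm]
          show (B 0 0 * 0 + B 0 1 * 1) ^ 2 + (B 1 0 * 0 + B 1 1 * 1) ^ 2
            = μ * ((0:ℝ) ^ 2 + 1 ^ 2)
          have : μ = r := by linarith
          rw [this, hrdef]; ring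
    · refine ⟨(WithLp.equiv 2 (Fin 2 → ℝ)).symm ![q, μ - p], ?_, ?_⟩
      · have h2 : ‖(WithLp.equiv 2 (Fin 2 → ℝ)).symm ![q, μ - p]‖ ^ 2 = q ^ 2 + (μ - p) ^ 2 := by
          rw [hnorm]; rfl
        have hq2' : 0 < q ^ 2 := by positivity
        nlinarith [norm_nonneg ((WithLp.equiv 2 (Fin 2 → ℝ)).symm ![q, μ - p]), sq_nonneg (μ - p)]
      · rw [hTnorm, hnorm]
        show (B 0 0 * q + B 0 1 * (μ - p)) ^ 2 + (B 1 0 * q + B 1 1 * (μ - p)) ^ 2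
          = μ * (q ^ 2 + (μ - p) ^ 2)
        rw [hqdef, hpdef] at hdet ⊢
        nlinarith [hdet, sq_nonneg q]
  have hub : ‖T‖ ≤ Real.sqrt μ := T.opNorm_le_bound (Real.sqrt_nonneg μ) key
  have hlb : Real.sqrt μ ≤ ‖T‖ := by
    have h1 : ‖T v‖ = Real.sqrt μ * ‖v‖ := by
      rw [← Real.sqrt_sq (norm_nonneg (T v)), hveq, Real.sqrt_mul hμ, Real.sqrt_sq (norm_nonneg v)]
    have h2 := T.le_opNorm v
    rw [h1] at h2
    exact le_of_mul_le_mul_right h2 hv0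
  have : specNorm B = Real.sqrt μ := le_antisymm hub hlb
  rw [this, Real.sq_sqrt hμ]

theorem opt_scaling_mul_inv_equilibrated {n : ℕ}
    (L : Matrix (Fin (2*n)) (Fin 2) ℝ)
    (hLI : LinearIndependent ℝ ![fun i => L i 0, fun i => L i 1])
    (βj β : ℝ)
    (hβj : βj = Real.sqrt (Real.sqrt (Lᵀ * L).det))
    (hβ : βj ≤ β) (hβj_pos : 0 < βj)
    (ε : ℝ) (hε : ε = 1 ∨ ε = -1)
    (cop fop ct ft : ℝ)
    (hcop : cop = enorm2 (fun i => L i 1) / βj)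
    (hfop : fop = -(∑ i, L i 0 * L i 1) / (enorm2 (fun i => L i 1) * βj))
    (hct : ct = enorm2 (fun i => L i 1) / β)
    (hft : ft = (-(∑ i, L i 0 * L i 1) + ε * Real.sqrt (β ^ 4 - βj ^ 4)) /
        (β * enorm2 (fun i => L i 1))) :
    (!![cop, fop; 0, cop⁻¹] : Matrix (Fin 2) (Fin 2) ℝ) *
        (!![ct, ft; 0, ct⁻¹] : Matrix (Fin 2) (Fin 2) ℝ)⁻¹ =
      !![β / βj, -ε * Real.sqrt (β ^ 4 - βj ^ 4) / (β * βj); 0, βj / β] ∧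
    specNorm ((!![cop, fop; 0, cop⁻¹] : Matrix (Fin 2) (Fin 2) ℝ) *
        (!![ct, ft; 0, ct⁻¹] : Matrix (Fin 2) (Fin 2) ℝ)⁻¹) ^ 2 =
      (β ^ 2 + Real.sqrt (β ^ 4 - βj ^ 4)) / βj ^ 2 := by
  have hβ_pos : 0 < β := lt_of_lt_of_le hβj_pos hβ
  -- the second column of L is nonzero
  have hL2 : (fun i => L i 1) ≠ 0 := by
    have := hLI.ne_zero 1
    simpa using this
  have hsum_pos : 0 < ∑ i, L i 1 ^ 2 := by
    obtain ⟨i, hi⟩ : ∃ i, L i 1 ≠ 0 := by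
      by_contra h
      push_neg at h
      exact hL2 (funext fun i => h i)
    exact Finset.sum_pos' (fun j _ => sq_nonneg (L j 1)) ⟨i, Finset.mem_univ i, by positivity⟩
  have hw_pos : 0 < enorm2 (fun i => L i 1) := by
    unfold enorm2
    exact Real.sqrt_pos.mpr hsum_pos
  set w := enorm2 (fun i => L i 1) with hw
  set s4 := Real.sqrt (β ^ 4 - βj ^ 4) with hs4def
  have hs4_nonneg : 0 ≤ s4 := Real.sqrt_nonneg _
  have hpow : βj ^ 4 ≤ β ^ 4 := pow_le_pow_left₀ hβj_pos.le hβ 4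
  have hs4_sq : s4 ^ 2 = β ^ 4 - βj ^ 4 := Real.sq_sqrt (by linarith)
  have hε2 : ε ^ 2 = 1 := by rcases hε with h | h <;> rw [h] <;> norm_num
  have hct_pos : 0 < ct := by rw [hct]; positivity
  have hct_ne : ct ≠ 0 := ne_of_gt hct_pos
  have hw_ne : w ≠ 0 := ne_of_gt hw_pos
  have hβ_ne : (β : ℝ) ≠ 0 := ne_of_gt hβ_pos
  have hβj_ne : (βj : ℝ) ≠ 0 := ne_of_gt hβj_pos
  -- invert the second matrix
  have hinv : (!![ct, ft; 0, ct⁻¹] : Matrix (Fin 2) (Fin 2) ℝ)⁻¹ = !![ct⁻¹, -ft; 0, ct] := by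
    apply Matrix.inv_eq_right_inv
    rw [Matrix.mul_fin_two, Matrix.one_fin_two]
    have g1 : ct * ct⁻¹ + ft * 0 = 1 := by field_simp; ring
    have g2 : ct * -ft + ft * ct = 0 := by ring
    have g3 : (0:ℝ) * ct⁻¹ + ct⁻¹ * 0 = 0 := by ring
    have g4 : (0:ℝ) * -ft + ct⁻¹ * ct = 1 := by field_simp; ring
    rw [g1, g2, g3, g4]
  -- part 1: the explicit product
  have hmain : (!![cop, fop; 0, cop⁻¹] : Matrix (Fin 2) (Fin 2) ℝ) *
      (!![ct, ft; 0, ct⁻¹] : Matrix (Fin 2) (Fin 2) ℝ)⁻¹ =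
      !![β / βj, -ε * s4 / (β * βj); 0, βj / β] := by
    rw [hinv, Matrix.mul_fin_two]
    have e11 : cop * ct⁻¹ + fop * 0 = β / βj := by
      rw [hcop, hct]; field_simp; ring
    have e12 : cop * -ft + fop * ct = -ε * s4 / (β * βj) := by
      rw [hcop, hct, hfop, hft]
      field_simp
      ring
    have e21 : (0:ℝ) * ct⁻¹ + cop⁻¹ * 0 = 0 := by ring
    have e22 : (0:ℝ) * -ft + cop⁻¹ * ct = βj / β := by
      rw [hcop, hct]; field_simp; ring
    rw [e11, e12, e21, e22]
  refine ⟨hmain, ?_⟩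
  rw [hmain]
  -- auxiliary algebraic facts
  have hb2 : (-ε * s4 / (β * βj)) ^ 2 = (β ^ 4 - βj ^ 4) / (β ^ 2 * βj ^ 2) := by
    have h1 : (-ε * s4) ^ 2 = β ^ 4 - βj ^ 4 := by
      have h2 : (-ε * s4) ^ 2 = ε ^ 2 * s4 ^ 2 := by ring
      rw [h2, hε2, one_mul, hs4_sq]
    rw [div_pow, h1, mul_pow]
  have hβj2 : (0:ℝ) < βj ^ 2 := by positivity
  -- part 2: the spectral norm
  apply specNorm_sq_fin_two
  · show (β / βj) ^ 2 + (0:ℝ) ^ 2 ≤ (β ^ 2 + s4) / βj ^ 2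
    have h1 : (β / βj) ^ 2 + (0:ℝ) ^ 2 = β ^ 2 / βj ^ 2 := by
      rw [div_pow]; ring
    rw [h1]
    gcongr
    linarith
  · show (-ε * s4 / (β * βj)) ^ 2 + (βj / β) ^ 2 ≤ (β ^ 2 + s4) / βj ^ 2
    rw [hb2]
    have h1 : (β ^ 4 - βj ^ 4) / (β ^ 2 * βj ^ 2) + (βj / β) ^ 2 = β ^ 2 / βj ^ 2 := by
      field_simp
      ring
    rw [h1]
    gcongr
    linarith
  · show ((β ^ 2 + s4) / βj ^ 2 - ((β / βj) ^ 2 + (0:ℝ) ^ 2)) *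
        ((β ^ 2 + s4) / βj ^ 2 - ((-ε * s4 / (β * βj)) ^ 2 + (βj / β) ^ 2))
      = (β / βj * (-ε * s4 / (β * βj)) + (0:ℝ) * (βj / β)) ^ 2
    have hqval : β / βj * (-ε * s4 / (β * βj)) + (0:ℝ) * (βj / β) = -ε * s4 / βj ^ 2 := by
      field_simp
      ring
    have hq2 : (-ε * s4 / βj ^ 2) ^ 2 = s4 ^ 2 / (βj ^ 2) ^ 2 := by
      have h2 : (-ε * s4 / βj ^ 2) ^ 2 = ε ^ 2 * s4 ^ 2 / (βj ^ 2) ^ 2 := by ring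
      rw [h2, hε2, one_mul]
    rw [hqval, hq2, hb2]
    field_simp
    ring
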